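/- Assume the Shore–Slaman Join Theorem for Turing degrees: for every n and all x, y ∈ ℕ^ℕ with y not ≤_T x^{(n)}, there is g ≥_T x with g^{(n+1)} ≡_T g ⊕ y ≡_T y ⊕ x^{(n+1)}. Then for all x, y, z ∈ ℕ^ℕ and all natural numbers n ≥ m: if (y ⊕ g)^{(m)} ≤_T (x ⊕ g)^{(n)} holds for all g ≥_T z, then y ≤_T (x ⊕ z)^{(n-m)}. -/

import Mathlib

open scoped Classical

/-- Codes for oracle (partial) computations: `Nat.Partrec.Code` plus an `oracle` constructor. -/
inductive OCode : Type
  | zero : OCode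
  | succ : OCode
  | left : OCode
  | right : OCode
  | oracle : OCode
  | pair : OCode → OCode → OCode
  | comp : OCode → OCode → OCode
  | prec : OCode → OCode → OCode
  | rfind' : OCode → OCode

/-- Evaluation of an oracle code relative to the (total) oracle `g`. -/
def OCode.eval (g : ℕ → ℕ) : OCode → ℕ →. ℕ
  | .zero => pure 0
  | .succ => Nat.succ
  | .left => ↑fun n : ℕ => n.unpair.1
  | .right => ↑fun n : ℕ => n.unpair.2
  | .oracle => ↑fun n : ℕ => g n
  | .pair cf cg => fun n => Nat.pair <$> OCode.eval g cf n <*> OCode.eval g cg n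
  | .comp cf cg => fun n => OCode.eval g cg n >>= OCode.eval g cf
  | .prec cf cg =>
    Nat.unpaired fun a n =>
      n.rec (OCode.eval g cf a) fun y IH => do
        let i ← IH
        OCode.eval g cg (Nat.pair a (Nat.pair y i))
  | .rfind' cf =>
    Nat.unpaired fun a m =>
      (Nat.rfind fun n => (fun m => m = 0) <$> OCode.eval g cf (Nat.pair a (n + m))).map (· + m)

/-- A Gödel numbering of oracle codes. -/
def OCode.encode : OCode → ℕ
  | .zero => 0
  | .succ => 1
  | .left => 2
  | .right => 3
  | .oracle => 4
  | .pair a b => 4 * Nat.pair a.encode b.encode + 5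
  | .comp a b => 4 * Nat.pair a.encode b.encode + 6
  | .prec a b => 4 * Nat.pair a.encode b.encode + 7
  | .rfind' a => 4 * Nat.pair a.encode a.encode + 8

/-- Turing reducibility between elements of Baire space. -/
def OTuringReducible (f g : ℕ → ℕ) : Prop :=
  ∃ c : OCode, ∀ n, OCode.eval g c n = Part.some (f n)

/-- Turing equivalence. -/
def TuringEquiv (f g : ℕ → ℕ) : Prop :=
  OTuringReducible f g ∧ OTuringReducible g f

/-- The Turing jump of `g`, as an element of Cantor space: the halting problem relative to `g`. -/
noncomputable def jump (g : ℕ → ℕ) : ℕ → ℕ := fun e =>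
  if ∃ c : OCode, c.encode = e ∧ ((OCode.eval g c) e).Dom then 1 else 0

/-- The `k`-th iterated Turing jump. -/
noncomputable def jumpIter (k : ℕ) (g : ℕ → ℕ) : ℕ → ℕ := jump^[k] g

/-- The Turing join (of elements of Baire space). -/
def join (f g : ℕ → ℕ) : ℕ → ℕ := fun n => if n % 2 = 0 then f (n / 2) else g (n / 2)

/-- substitute the oracle calls in `c` by the code `d` -/
def OCode.subst : OCode → OCode → OCode
  | .zero, _ => .zero
  | .succ, _ => .succ
  | .left, _ => .left
  | .right, _ => .right
  | .oracle, d => d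
  | .pair a b, d => .pair (a.subst d) (b.subst d)
  | .comp a b, d => .comp (a.subst d) (b.subst d)
  | .prec a b, d => .prec (a.subst d) (b.subst d)
  | .rfind' a, d => .rfind' (a.subst d)

theorem OCode.eval_subst {g h : ℕ → ℕ} {d : OCode} (hd : ∀ n, OCode.eval h d n = Part.some (g n)) :
    ∀ c : OCode, OCode.eval h (c.subst d) = OCode.eval g c := by
  intro c
  induction c with
  | zero => rfl
  | succ => rfl
  | left => rfl
  | right => rfl
  | oracle => funext n; simp [OCode.subst, OCode.eval, hd n]
  | pair a b iha ihb => simp [OCode.subst, OCode.eval, iha, ihb]; rfl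
  | comp a b iha ihb => simp [OCode.subst, OCode.eval, iha, ihb]; rfl
  | prec a b iha ihb => simp [OCode.subst, OCode.eval, iha, ihb]; rfl
  | rfind' a iha => simp [OCode.subst, OCode.eval, iha]; rfl

theorem OTuringReducible.refl (f : ℕ → ℕ) : OTuringReducible f f :=
  ⟨.oracle, fun n => rfl⟩

theorem OTuringReducible.trans {f g h : ℕ → ℕ} (h1 : OTuringReducible f g)
    (h2 : OTuringReducible g h) : OTuringReducible f h := by
  obtain ⟨c, hc⟩ := h1
  obtain ⟨d, hd⟩ := h2
  exact ⟨c.subst d, fun n => by rw [OCode.eval_subst hd c, hc n]⟩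

def ofPC : Nat.Partrec.Code → OCode
  | .zero => .zero
  | .succ => .succ
  | .left => .left
  | .right => .right
  | .pair a b => .pair (ofPC a) (ofPC b)
  | .comp a b => .comp (ofPC a) (ofPC b)
  | .prec a b => .prec (ofPC a) (ofPC b)
  | .rfind' a => .rfind' (ofPC a)

theorem eval_ofPC (g : ℕ → ℕ) : ∀ c : Nat.Partrec.Code, OCode.eval g (ofPC c) = c.eval := by
  intro c
  induction c with
  | zero => rfl
  | succ => rfl
  | left => rfl
  | right => rfl
  | pair a b iha ihb => simp [ofPC, OCode.eval, Nat.Partrec.Code.eval, iha, ihb]; rfl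
  | comp a b iha ihb => simp [ofPC, OCode.eval, Nat.Partrec.Code.eval, iha, ihb]; rfl
  | prec a b iha ihb => simp [ofPC, OCode.eval, Nat.Partrec.Code.eval, iha, ihb]; rfl
  | rfind' a iha => simp [ofPC, OCode.eval, Nat.Partrec.Code.eval, iha]; rfl

theorem some_bind_pfun (a : ℕ) (f : ℕ →. ℕ) : Part.some a >>= f = f a :=
  Part.bind_some a f

/-- a code (usable with any oracle) for a computable function -/
theorem exists_ocode_of_computable {f : ℕ → ℕ} (hf : Computable f) :
    ∃ c : OCode, ∀ (g : ℕ → ℕ) (n : ℕ), OCode.eval g c n = Part.some (f n) := by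
  obtain ⟨c, hc⟩ := Nat.Partrec.Code.exists_code.1 (Partrec.nat_iff.1 hf)
  exact ⟨ofPC c, fun g n => by rw [eval_ofPC g c, hc]; rfl⟩

/-- `g ∘ F ≤_T g` for computable `F`. -/
theorem reducible_comp_computable {F : ℕ → ℕ} (hF : Computable F) (g : ℕ → ℕ) :
    OTuringReducible (fun n => g (F n)) g := by
  obtain ⟨c, hc⟩ := exists_ocode_of_computable hF
  refine ⟨.comp .oracle c, fun n => ?_⟩
  simp [OCode.eval, hc g n, some_bind_pfun]

theorem reducible_of_computable {f : ℕ → ℕ} (hf : Computable f) (g : ℕ → ℕ) :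
    OTuringReducible f g := by
  obtain ⟨c, hc⟩ := exists_ocode_of_computable hf
  exact ⟨c, hc g⟩

theorem join_left (f g : ℕ → ℕ) : OTuringReducible f (join f g) := by
  have h := reducible_comp_computable (F := fun n => 2 * n)
    (Primrec.to_comp (Primrec.nat_mul.comp (.const 2) .id)) (join f g)
  have : (fun n => join f g (2 * n)) = f := by
    funext n; simp [join, Nat.mul_div_cancel_left, Nat.mul_mod_right]
  rwa [this] at h

theorem join_right (f g : ℕ → ℕ) : OTuringReducible g (join f g) := by
  have h := reducible_comp_computable (F := fun n => 2 * n + 1)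
    (Primrec.to_comp (Primrec.succ.comp (Primrec.nat_mul.comp (.const 2) .id))) (join f g)
  have : (fun n => join f g (2 * n + 1)) = g := by
    funext n
    have h1 : (2 * n + 1) % 2 = 1 := by omega
    have h2 : (2 * n + 1) / 2 = n := by omega
    simp [join, h1, h2]
  rwa [this] at h

theorem join_comm_le (f g : ℕ → ℕ) : OTuringReducible (join f g) (join g f) := by
  have h := reducible_comp_computable (F := fun n => if n % 2 = 0 then n + 1 else n - 1)
    (Primrec.to_comp (Primrec.ite (Primrec.eq.comp (Primrec.nat_mod.comp .id (.const 2)) (.const 0))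
      Primrec.succ (Primrec.nat_sub.comp .id (.const 1)))) (join g f)
  have : (fun n => join g f (if n % 2 = 0 then n + 1 else n - 1)) = join f g := by
    funext n
    rcases Nat.mod_two_eq_zero_or_one n with hn | hn
    · have ha : (n + 1) % 2 = 1 := by omega
      have hb : (n + 1) / 2 = n / 2 := by omega
      simp [join, hn, ha, hb]
    · have ha : (n - 1) % 2 = 0 := by omega
      have hb : (n - 1) / 2 = n / 2 := by omega
      simp [join, hn, ha, hb]
  rwa [this] at h

theorem OTuringReducible.comp_computable {f h : ℕ → ℕ} {F : ℕ → ℕ}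
    (hf : OTuringReducible f h) (hF : Computable F) :
    OTuringReducible (fun n => f (F n)) h := by
  obtain ⟨c, hc⟩ := hf
  obtain ⟨cF, hcF⟩ := exists_ocode_of_computable hF
  refine ⟨.comp c cF, fun n => ?_⟩
  simp [OCode.eval, hcF h n, hc, some_bind_pfun]

theorem ite_mod2_reducible {u v h : ℕ → ℕ} (hu : OTuringReducible u h)
    (hv : OTuringReducible v h) :
    OTuringReducible (fun n => if n % 2 = 0 then u n else v n) h := by
  obtain ⟨cu, hcu⟩ := hu
  obtain ⟨cv, hcv⟩ := hv
  have hP : Computable fun n => Nat.pair n (n % 2) :=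
    Primrec.to_comp (Primrec₂.natPair.comp .id (Primrec.nat_mod.comp .id (.const 2)))
  obtain ⟨cP, hcP⟩ := exists_ocode_of_computable hP
  refine ⟨.comp (.prec cu (.comp cv .left)) cP, fun n => ?_⟩
  rcases Nat.mod_two_eq_zero_or_one n with hn | hn <;>
    simp [OCode.eval, hcP h n, hn, Nat.unpaired, hcu, hcv, some_bind_pfun]

theorem join_le {f g h : ℕ → ℕ} (hf : OTuringReducible f h) (hg : OTuringReducible g h) :
    OTuringReducible (join f g) h := by
  have hhalf : Computable fun n : ℕ => n / 2 :=
    Primrec.to_comp (Primrec.nat_div.comp .id (.const 2))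
  exact ite_mod2_reducible (hf.comp_computable hhalf) (hg.comp_computable hhalf)

def ofNatO : ℕ → OCode
  | 0 => .zero
  | 1 => .succ
  | 2 => .left
  | 3 => .right
  | 4 => .oracle
  | n + 5 =>
    let m := n / 4
    have hm1 : m.unpair.1 < n + 5 := lt_of_le_of_lt (le_trans (Nat.unpair_left_le m) (Nat.div_le_self n 4)) (by omega)
    have hm2 : m.unpair.2 < n + 5 := lt_of_le_of_lt (le_trans (Nat.unpair_right_le m) (Nat.div_le_self n 4)) (by omega)
    match n % 4 with
    | 0 => .pair (ofNatO m.unpair.1) (ofNatO m.unpair.2)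
    | 1 => .comp (ofNatO m.unpair.1) (ofNatO m.unpair.2)
    | 2 => .prec (ofNatO m.unpair.1) (ofNatO m.unpair.2)
    | _ => .rfind' (ofNatO m.unpair.1)
decreasing_by
  all_goals (have := Nat.unpair_left_le (n / 4); have := Nat.unpair_right_le (n / 4); have := Nat.div_le_self n 4; omega)

theorem ofNatO_encode : ∀ c : OCode, ofNatO c.encode = c := by
  intro c
  induction c with
  | zero => simp [OCode.encode, ofNatO]
  | succ => simp [OCode.encode, ofNatO]
  | left => simp [OCode.encode, ofNatO]
  | right => simp [OCode.encode, ofNatO]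
  | oracle => simp [OCode.encode, ofNatO]
  | pair a b iha ihb =>
      have h : OCode.encode (.pair a b) = 4 * Nat.pair a.encode b.encode + 5 := rfl
      rw [h]
      have h4 : (4 * Nat.pair a.encode b.encode) % 4 = 0 := by omega
      have h5 : (4 * Nat.pair a.encode b.encode) / 4 = Nat.pair a.encode b.encode := by omega
      simp [ofNatO, h4, h5, iha, ihb]
  | comp a b iha ihb =>
      have h : OCode.encode (.comp a b) = (4 * Nat.pair a.encode b.encode + 1) + 5 := rfl
      rw [h]
      have h4 : (4 * Nat.pair a.encode b.encode + 1) % 4 = 1 := by omega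
      have h5 : (4 * Nat.pair a.encode b.encode + 1) / 4 = Nat.pair a.encode b.encode := by omega
      simp [ofNatO, h4, h5, iha, ihb]
  | prec a b iha ihb =>
      have h : OCode.encode (.prec a b) = (4 * Nat.pair a.encode b.encode + 2) + 5 := rfl
      rw [h]
      have h4 : (4 * Nat.pair a.encode b.encode + 2) % 4 = 2 := by omega
      have h5 : (4 * Nat.pair a.encode b.encode + 2) / 4 = Nat.pair a.encode b.encode := by omega
      simp [ofNatO, h4, h5, iha, ihb]
  | rfind' a iha =>
      have h : OCode.encode (.rfind' a) = (4 * Nat.pair a.encode a.encode + 3) + 5 := rfl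
      rw [h]
      have h4 : (4 * Nat.pair a.encode a.encode + 3) % 4 = 3 := by omega
      have h5 : (4 * Nat.pair a.encode a.encode + 3) / 4 = Nat.pair a.encode a.encode := by omega
      simp [ofNatO, h4, h5, iha]

theorem encode_injective : Function.Injective OCode.encode :=
  Function.LeftInverse.injective ofNatO_encode

theorem jump_encode (g : ℕ → ℕ) (c : OCode) :
    jump g c.encode = if (OCode.eval g c c.encode).Dom then 1 else 0 := by
  unfold jump
  congr 1
  simp only [eq_iff_iff]
  constructor
  · rintro ⟨c2, hc2, hd⟩
    rwa [encode_injective hc2] at hd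
  · exact fun hd => ⟨c, rfl, hd⟩

theorem jump_invalid (g : ℕ → ℕ) {e : ℕ} (he : ∀ c : OCode, c.encode ≠ e) :
    jump g e = 0 := by
  unfold jump
  rw [if_neg]
  rintro ⟨c2, hc2, -⟩
  exact he c2 hc2

def cdiv : OCode := .rfind' (.comp .succ .zero)

theorem cdiv_not_dom (g : ℕ → ℕ) (n : ℕ) : ¬ (OCode.eval g cdiv n).Dom := by
  simp only [cdiv, OCode.eval, Nat.unpaired, Part.map_Dom]
  intro h
  obtain ⟨k, hk, -⟩ := Nat.rfind_dom.1 h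
  change true ∈ (fun m => decide (m = 0)) <$> ((Part.some 0).bind (fun n => Part.some (n + 1))) at hk
  simp at hk

theorem jump_cdiv (g : ℕ → ℕ) : jump g cdiv.encode = 0 := by
  rw [jump_encode]
  exact if_neg (cdiv_not_dom g _)

theorem jump_not_reducible (w : ℕ → ℕ) : ¬ OTuringReducible (jump w) w := by
  rintro ⟨c, hc⟩
  have hP : Computable fun n : ℕ => Nat.pair n 0 :=
    Primrec.to_comp (Primrec₂.natPair.comp .id (.const 0))
  obtain ⟨cP, hcP⟩ := exists_ocode_of_computable hP
  set hcode : OCode := .comp (.rfind' (.comp c .left)) cP with hhc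
  have key : ∀ k, (OCode.eval w hcode k).Dom ↔ jump w k = 0 := by
    intro k
    have : OCode.eval w hcode k =
        (Nat.rfind fun n => Part.some (decide (jump w k = 0))).map (· + 0) := by
      simp [hhc, OCode.eval, hcP w k, Nat.unpaired, hc, some_bind_pfun]
    rw [this]
    simp only [Part.map_Dom, Nat.rfind_dom]
    constructor
    · rintro ⟨n, hn, -⟩
      simpa using hn
    · intro h
      exact ⟨0, by simpa using h, fun {m} _ => trivial⟩
  by_cases hD : (OCode.eval w hcode hcode.encode).Dom
  · have h1 : jump w hcode.encode = 0 := (key _).1 hD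
    have h2 : jump w hcode.encode = 1 := by
      rw [jump_encode, if_pos hD]
    omega
  · have h1 : jump w hcode.encode = 0 := by
      rw [jump_encode, if_neg hD]
    exact hD ((key _).2 h1)

def constO : ℕ → OCode
  | 0 => .zero
  | e + 1 => .comp .succ (constO e)

theorem eval_constO (g : ℕ → ℕ) (e n : ℕ) : OCode.eval g (constO e) n = Part.some e := by
  induction e with
  | zero => rfl
  | succ e ih => simp [constO, OCode.eval, ih, some_bind_pfun]

def encConst : ℕ → ℕ := fun e => (constO e).encode

theorem primrec_encConst : Primrec encConst := by
  have : Primrec (fun e => Nat.rec (motive := fun _ => ℕ) 0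
      (fun _ ih => 4 * Nat.pair 1 ih + 6) e) := by
    refine Primrec.nat_rec₁ 0 ?_
    exact (Primrec.nat_add.comp
      (Primrec.nat_mul.comp (.const 4)
        (Primrec₂.natPair.comp (.const 1) (Primrec.snd (α := ℕ) (β := ℕ)))) (.const 6)).to₂
  refine this.of_eq fun e => ?_
  induction e with
  | zero => rfl
  | succ e ih => simp only [encConst, constO, OCode.encode] at ih ⊢; rw [ih]

/-- the numeric branch combinator underlying the encodings -/
def branchN (v1 v2 r : ℕ) : ℕ :=
  if r = 0 then 4 * Nat.pair v1 v2 + 5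
  else if r = 1 then 4 * Nat.pair v1 v2 + 6
  else if r = 2 then 4 * Nat.pair v1 v2 + 7
  else 4 * Nat.pair v1 v1 + 8

/-- generic primrec lemma for functions defined by `OCode`-index recursion -/
theorem primrec_indexRec (b4 : ℕ) {f : ℕ → ℕ} (h0 : ∀ k, k < 4 → f k = k) (h4 : f 4 = b4)
    (hrec : ∀ k, f (k + 5) =
      branchN (f ((k / 4).unpair.1)) (f ((k / 4).unpair.2)) (k % 4)) :
    Primrec f := by
  classical
  set G : List ℕ → ℕ := fun l =>
    let n := l.length
    if n < 4 then n
    else if n = 4 then b4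
    else
      branchN (l.getD ((n - 5) / 4).unpair.1 0) (l.getD ((n - 5) / 4).unpair.2 0) ((n - 5) % 4)
    with hG
  have hGp : Primrec G := by
    have hlen : Primrec (List.length : List ℕ → ℕ) := Primrec.list_length
    have hm : Primrec (fun l : List ℕ => (l.length - 5) / 4) :=
      Primrec.nat_div.comp (Primrec.nat_sub.comp hlen (.const 5)) (.const 4)
    have hu1 : Primrec (fun l : List ℕ => ((l.length - 5) / 4).unpair.1) :=
      Primrec.fst.comp (Primrec.unpair.comp hm)
    have hu2 : Primrec (fun l : List ℕ => ((l.length - 5) / 4).unpair.2) :=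
      Primrec.snd.comp (Primrec.unpair.comp hm)
    have hv1 : Primrec (fun l : List ℕ => l.getD ((l.length - 5) / 4).unpair.1 0) :=
      (Primrec.list_getD 0).comp .id hu1
    have hv2 : Primrec (fun l : List ℕ => l.getD ((l.length - 5) / 4).unpair.2 0) :=
      (Primrec.list_getD 0).comp .id hu2
    have hr : Primrec (fun l : List ℕ => (l.length - 5) % 4) :=
      Primrec.nat_mod.comp (Primrec.nat_sub.comp hlen (.const 5)) (.const 4)
    have hbr : Primrec (fun l : List ℕ =>
        branchN (l.getD ((l.length - 5) / 4).unpair.1 0)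
          (l.getD ((l.length - 5) / 4).unpair.2 0) ((l.length - 5) % 4)) := by
      unfold branchN
      refine Primrec.ite (Primrec.eq.comp hr (.const 0))
        (Primrec.nat_add.comp
          (Primrec.nat_mul.comp (.const 4) (Primrec₂.natPair.comp hv1 hv2)) (.const 5)) ?_
      refine Primrec.ite (Primrec.eq.comp hr (.const 1))
        (Primrec.nat_add.comp
          (Primrec.nat_mul.comp (.const 4) (Primrec₂.natPair.comp hv1 hv2)) (.const 6)) ?_
      refine Primrec.ite (Primrec.eq.comp hr (.const 2))
        (Primrec.nat_add.comp
          (Primrec.nat_mul.comp (.const 4) (Primrec₂.natPair.comp hv1 hv2)) (.const 7))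
        (Primrec.nat_add.comp
          (Primrec.nat_mul.comp (.const 4) (Primrec₂.natPair.comp hv1 hv1)) (.const 8))
    refine Primrec.ite (Primrec.nat_lt.comp hlen (.const 4)) hlen ?_
    exact Primrec.ite (Primrec.eq.comp hlen (.const 4)) (.const b4) hbr
  have key : Primrec₂ (fun _ : Unit => f) := by
    refine Primrec.nat_strong_rec _ ((Primrec.option_some.comp (hGp.comp Primrec.snd)).to₂) ?_
    intro _ n
    simp only [Option.some_inj]
    have hlen : ((List.range n).map f).length = n := by simp
    have hget : ∀ i, i < n → ((List.range n).map f).getD i 0 = f i := by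
      intro i hi
      simp [List.getD_eq_getElem?_getD, List.getElem?_range hi]
    rcases lt_or_ge n 4 with h | h
    · simp only [hG, hlen, if_pos h]
      exact (h0 n h).symm
    rcases eq_or_lt_of_le h with h4' | h5
    · simp only [hG, hlen, ← h4', if_neg (by omega : ¬(4:ℕ) < 4)]
      simp [h4]
    · have hn5 : 5 ≤ n := h5
      obtain ⟨k, rfl⟩ : ∃ k, n = k + 5 := ⟨n - 5, by omega⟩
      have hi1 : (k / 4).unpair.1 < k + 5 :=
        lt_of_le_of_lt (le_trans (Nat.unpair_left_le _) (Nat.div_le_self k 4)) (by omega)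
      have hi2 : (k / 4).unpair.2 < k + 5 :=
        lt_of_le_of_lt (le_trans (Nat.unpair_right_le _) (Nat.div_le_self k 4)) (by omega)
      simp only [hG, hlen, if_neg (by omega : ¬ k + 5 < 4), if_neg (by omega : ¬ k + 5 = 4),
        Nat.add_sub_cancel, hget _ hi1, hget _ hi2]
      exact (hrec k).symm
  exact key.comp (.const ()) .id

theorem primrec_eN : Primrec (fun n => (ofNatO n).encode) := by
  refine primrec_indexRec 4 ?_ ?_ ?_
  · intro k hk
    interval_cases k <;> simp [ofNatO, OCode.encode]
  · simp [ofNatO, OCode.encode]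
  · intro k
    have h4 : k % 4 = 0 ∨ k % 4 = 1 ∨ k % 4 = 2 ∨ k % 4 = 3 := by omega
    rcases h4 with h | h | h | h <;>
      simp [ofNatO, h, OCode.encode, branchN]

theorem primrec_sN (d : OCode) : Primrec (fun n => ((ofNatO n).subst d).encode) := by
  refine primrec_indexRec d.encode ?_ ?_ ?_
  · intro k hk
    interval_cases k <;> simp [ofNatO, OCode.subst, OCode.encode]
  · simp [ofNatO, OCode.subst, OCode.encode]
  · intro k
    have h4 : k % 4 = 0 ∨ k % 4 = 1 ∨ k % 4 = 2 ∨ k % 4 = 3 := by omega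
    rcases h4 with h | h | h | h <;>
      simp [ofNatO, h, OCode.subst, OCode.encode, branchN]

theorem jump_mono {a b : ℕ → ℕ} (h : OTuringReducible a b) :
    OTuringReducible (jump a) (jump b) := by
  obtain ⟨d, hd⟩ := h
  set F : ℕ → ℕ := fun e =>
    if (ofNatO e).encode = e then
      4 * Nat.pair (((ofNatO e).subst d).encode) (encConst e) + 6
    else cdiv.encode with hF
  have hFc : Computable F := by
    refine Primrec.to_comp ?_
    refine Primrec.ite (Primrec.eq.comp primrec_eN .id) ?_ (.const cdiv.encode)
    exact Primrec.nat_add.comp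
      (Primrec.nat_mul.comp (.const 4)
        (Primrec₂.natPair.comp (primrec_sN d) primrec_encConst)) (.const 6)
  have key : ∀ e, jump a e = jump b (F e) := by
    intro e
    by_cases he : (ofNatO e).encode = e
    · set c : OCode := ofNatO e with hc
      have hFe : F e = (OCode.comp (c.subst d) (constO e)).encode := by
        simp only [hF, hc, if_pos (show (ofNatO e).encode = e from he), OCode.encode, encConst]
      have h1 : jump b (F e) =
          if (OCode.eval b (OCode.comp (c.subst d) (constO e)) (F e)).Dom then 1 else 0 := by
        rw [hFe, jump_encode, ← hFe]
      have h2 : OCode.eval b (OCode.comp (c.subst d) (constO e)) (F e) =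
          OCode.eval a c e := by
        simp [OCode.eval, eval_constO, OCode.eval_subst hd, some_bind_pfun]
      have h3 : jump a e = if (OCode.eval a c e).Dom then 1 else 0 := by
        conv_lhs => rw [← he]
        rw [jump_encode, he]
      rw [h1, h2, h3]
    · have h1 : jump a e = 0 := by
        refine jump_invalid a fun c hce => ?_
        apply he
        rw [← hce, ofNatO_encode]
      have h2 : jump b (F e) = 0 := by
        rw [hF]
        simp only [if_neg he]
        exact jump_cdiv b
      rw [h1, h2]
  have : jump a = fun e => jump b (F e) := funext key
  rw [this]
  exact reducible_comp_computable hFc (jump b)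

theorem jumpIter_succ' (k : ℕ) (g : ℕ → ℕ) : jumpIter (k + 1) g = jump (jumpIter k g) :=
  Function.iterate_succ_apply' jump k g

theorem jumpIter_add (m k : ℕ) (g : ℕ → ℕ) :
    jumpIter m (jumpIter k g) = jumpIter (m + k) g :=
  (Function.iterate_add_apply jump m k g).symm

theorem jumpIter_mono (k : ℕ) {a b : ℕ → ℕ} (h : OTuringReducible a b) :
    OTuringReducible (jumpIter k a) (jumpIter k b) := by
  induction k with
  | zero => exact h
  | succ k ih => rw [jumpIter_succ', jumpIter_succ']; exact jump_mono ih


/-- **The Cancellation Lemma from the Shore–Slaman Join Theorem**: assuming the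
Shore–Slaman Join Theorem for Turing degrees, if `(y ⊕ g)⁽ᵐ⁾ ≤_T (x ⊕ g)⁽ⁿ⁾` for
every `g ≥_T z` then `y ≤_T (x ⊕ z)⁽ⁿ⁻ᵐ⁾`. -/
theorem cancellation_of_shore_slaman
    (hSS : ∀ (n : ℕ) (x y : ℕ → ℕ), ¬ OTuringReducible y (jumpIter n x) →
      ∃ g : ℕ → ℕ, OTuringReducible x g ∧
        TuringEquiv (jumpIter (n + 1) g) (join g y) ∧
        TuringEquiv (join g y) (join y (jumpIter (n + 1) x)))
    (x y z : ℕ → ℕ) (m n : ℕ) (hmn : m ≤ n)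
    (H : ∀ g : ℕ → ℕ, OTuringReducible z g →
      OTuringReducible (jumpIter m (join y g)) (jumpIter n (join x g))) :
    OTuringReducible y (jumpIter (n - m) (join x z)) := by
  by_contra hy
  obtain ⟨g, hxzg, ⟨hA, hB⟩, -⟩ := hSS (n - m) (join x z) y hy
  have hzg : OTuringReducible z g := (join_right x z).trans hxzg
  have hxg : OTuringReducible x g := (join_left x z).trans hxzg
  have hH := H g hzg
  have h2 : OTuringReducible (jumpIter n (join x g)) (jumpIter n g) :=
    jumpIter_mono n (join_le hxg (OTuringReducible.refl g))
  have h3 : OTuringReducible (jumpIter (n - m + 1) g) (join y g) :=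
    hA.trans (join_comm_le g y)
  have h4 := jumpIter_mono m h3
  have h5 : jumpIter m (jumpIter (n - m + 1) g) = jumpIter (n + 1) g := by
    have hnm : m + (n - m + 1) = n + 1 := by omega
    rw [jumpIter_add, hnm]
  rw [h5] at h4
  have h6 : OTuringReducible (jumpIter (n + 1) g) (jumpIter n g) :=
    (h4.trans hH).trans h2
  rw [jumpIter_succ'] at h6
  exact jump_not_reducible (jumpIter n g) h6
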